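/- For any depot d and target i, the inequality x_{di} ≤ 2 does not define a facet of the GMDTSP polytope P: the face it induces is strictly contained in a face of codimension ≥ 2 (it forces the degenerate two-edge cycle d–i–d, hence also x_e = 0 for all other edges e incident to i and y_i = 1). -/

import Mathlib

open Finset

/-- A feasible GMDTSP solution: a collection of simple cycles on the complete
target–depot graph (no depot–depot edges), each cycle containing exactly one
depot, visiting at least one target of every cluster.  `x u v` is the number of
times the edge `{u,v}` is used (2 only on degenerate depot–target two-edge
cycles) and `y t` indicates whether target `t` is visited. -/
structure GMDTSPSol (T D : Type*) [Fintype T] [Fintype D]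
    (clusters : Finset (Finset T)) where
  x : (T ⊕ D) → (T ⊕ D) → ℕ
  y : T → ℕ
  symm : ∀ u v, x u v = x v u
  loopless : ∀ u, x u u = 0
  no_depot_depot : ∀ d d' : D, x (Sum.inr d) (Sum.inr d') = 0
  xTT_le_one : ∀ t t' : T, x (Sum.inl t) (Sum.inl t') ≤ 1
  xDT_le_two : ∀ (d : D) (t : T), x (Sum.inr d) (Sum.inl t) ≤ 2
  y_le_one : ∀ t, y t ≤ 1
  degree : ∀ t : T, ∑ v : T ⊕ D, x (Sum.inl t) v = 2 * y t
  depot_degree : ∀ d : D, ∑ v : T ⊕ D, x (Sum.inr d) v ≤ 2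
  connected : ∀ t : T, y t = 1 →
    ∃ d : D, Relation.ReflTransGen (fun u v => 0 < x u v) (Sum.inl t) (Sum.inr d)
  one_depot_per_cycle : ∀ d d' : D, d ≠ d' →
    ¬ Relation.ReflTransGen (fun u v => 0 < x u v) (Sum.inr d) (Sum.inr d')
  covers : ∀ C ∈ clusters, ∃ t ∈ C, y t = 1

/-- `x(δ(S))`: total multiplicity of solution edges crossing the cut `(S, V∖S)`,
for a set `S` of targets. -/
def cutS {T D : Type*} [Fintype T] [DecidableEq T] [Fintype D]
    {clusters : Finset (Finset T)} (sol : GMDTSPSol T D clusters)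
    (S : Finset T) : ℕ :=
  ∑ a ∈ S, ((∑ b ∈ Sᶜ, sol.x (Sum.inl a) (Sum.inl b)) +
    ∑ d : D, sol.x (Sum.inl a) (Sum.inr d))

noncomputable section

/-- The incidence vector `(x, y)` of a feasible GMDTSP solution, viewed as a
point of `ℝ^{E} × ℝ^{T}` (edge coordinates stored symmetrically). -/
def incVec {T D : Type*} [Fintype T] [Fintype D] {clusters : Finset (Finset T)}
    (sol : GMDTSPSol T D clusters) : ((T ⊕ D) → (T ⊕ D) → ℝ) × (T → ℝ) :=
  (fun u v => (sol.x u v : ℝ), fun t => (sol.y t : ℝ))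

/-- `P(F)`: the convex hull of incidence vectors of feasible GMDTSP solutions
satisfying `y_v = 1` for all `v ∈ F`.  The GMDTSP polytope is `P = P(∅)` and
the MDTSP polytope is `Q = P(T)`. -/
def PF (T D : Type*) [Fintype T] [Fintype D] (clusters : Finset (Finset T))
    (F : Finset T) : Set (((T ⊕ D) → (T ⊕ D) → ℝ) × (T → ℝ)) :=
  convexHull ℝ
    {p | ∃ sol : GMDTSPSol T D clusters, (∀ v ∈ F, sol.y v = 1) ∧ p = incVec sol}

/-- The dimension of a set: the dimension of its affine hull. -/
def dimOf {T D : Type*} [Fintype T] [Fintype D]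
    (s : Set (((T ⊕ D) → (T ⊕ D) → ℝ) × (T → ℝ))) : ℕ :=
  Module.finrank ℝ (affineSpan ℝ s).direction

/-- The inequality `f p ≥ b` is valid for `P` and defines a facet of `P`. -/
def IsFacetGe {T D : Type*} [Fintype T] [Fintype D]
    (f : ((T ⊕ D) → (T ⊕ D) → ℝ) × (T → ℝ) → ℝ) (b : ℝ)
    (P : Set (((T ⊕ D) → (T ⊕ D) → ℝ) × (T → ℝ))) : Prop :=
  (∀ p ∈ P, b ≤ f p) ∧ dimOf {p ∈ P | f p = b} = dimOf P - 1

/-- The inequality `f p ≤ b` is valid for `P` and defines a facet of `P`. -/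
def IsFacetLe {T D : Type*} [Fintype T] [Fintype D]
    (f : ((T ⊕ D) → (T ⊕ D) → ℝ) × (T → ℝ) → ℝ) (b : ℝ)
    (P : Set (((T ⊕ D) → (T ⊕ D) → ℝ) × (T → ℝ))) : Prop :=
  (∀ p ∈ P, f p ≤ b) ∧ dimOf {p ∈ P | f p = b} = dimOf P - 1


namespace GMDTSPAux

set_option linter.unusedSectionVars false
set_option linter.unnecessarySeqFocus false

attribute [local instance 2000] instBEqOfDecidableEq
attribute [local instance 2000] instLawfulBEq

variable {T D : Type*} [DecidableEq T] [DecidableEq D]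

/-- Edge list of an open path through the targets of `m`, ending at depot `d`. -/
def edL (d : D) : List T → List ((T ⊕ D) × (T ⊕ D))
  | [] => []
  | [t] => [(Sum.inl t, Sum.inr d)]
  | t :: t' :: r => (Sum.inl t, Sum.inl t') :: edL d (t' :: r)

/-- Edge list of the closed cycle `d, t, r..., d`. -/
def EL (d : D) (t : T) (r : List T) : List ((T ⊕ D) × (T ⊕ D)) :=
  (Sum.inr d, Sum.inl t) :: edL d (t :: r)

lemma edL_map_fst (d : D) : ∀ m : List T, (edL d m).map Prod.fst = m.map Sum.inl
  | [] => rfl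
  | [t] => rfl
  | t :: t' :: r => by
      simp only [edL, List.map_cons, List.cons.injEq, true_and]
      exact edL_map_fst d (t' :: r)

lemma edL_map_snd (d : D) : ∀ (t : T) (r : List T),
    (edL d (t :: r)).map Prod.snd = r.map Sum.inl ++ [Sum.inr d]
  | t, [] => rfl
  | t, t' :: r => by
      simp only [edL, List.map_cons, List.cons.injEq, true_and]
      rw [edL_map_snd d t' r]; simp

lemma EL_map_fst (d : D) (t : T) (r : List T) :
    (EL d t r).map Prod.fst = Sum.inr d :: (t :: r).map Sum.inl := by
  simp [EL, edL_map_fst]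

lemma EL_map_snd (d : D) (t : T) (r : List T) :
    (EL d t r).map Prod.snd = (t :: r).map Sum.inl ++ [Sum.inr d] := by
  simp [EL, edL_map_snd]

lemma mem_of_fst_edL {d : D} {m : List T} {p : (T ⊕ D) × (T ⊕ D)} (hp : p ∈ edL d m)
    {s : T} (hs : p.1 = Sum.inl s) : s ∈ m := by
  have : p.1 ∈ (edL d m).map Prod.fst := List.mem_map_of_mem hp
  rw [edL_map_fst] at this
  rw [hs] at this
  simpa using this

lemma mem_of_snd_edL {d : D} {t : T} {r : List T} {p : (T ⊕ D) × (T ⊕ D)}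
    (hp : p ∈ edL d (t :: r)) {s : T} (hs : p.2 = Sum.inl s) : s ∈ r := by
  have : p.2 ∈ (edL d (t :: r)).map Prod.snd := List.mem_map_of_mem hp
  rw [edL_map_snd] at this
  rw [hs] at this
  simpa using this

lemma edL_ne (d : D) : ∀ m : List T, m.Nodup → ∀ p ∈ edL d m, p.1 ≠ p.2
  | [], _, p, hp => absurd hp (by simp [edL])
  | [t], _, p, hp => by
      simp only [edL, List.mem_singleton] at hp
      subst hp; simp
  | t :: t' :: r, hnd, p, hp => by
      simp only [edL, List.mem_cons] at hp
      rcases hp with rfl | hp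
      · have : t ≠ t' := by
          intro h; subst h; simp at hnd
        simp [this]
      · exact edL_ne d (t' :: r) (List.Nodup.of_cons hnd) p hp

lemma edL_not_both (d : D) : ∀ m : List T, m.Nodup → ∀ a b : T,
    (Sum.inl a, Sum.inl b) ∈ edL d m → (Sum.inl b, Sum.inl a) ∈ edL d m → False
  | [], _, a, b, h1, _ => by simp [edL] at h1
  | [t], _, a, b, h1, _ => by simp [edL] at h1
  | t :: t' :: r, hnd, a, b, h1, h2 => by
      simp only [edL, List.mem_cons, Prod.mk.injEq, Sum.inl.injEq] at h1 h2
      rcases h1 with ⟨rfl, rfl⟩ | h1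
      · rcases h2 with ⟨hb, ha⟩ | h2
        · simp at hnd
          exact hnd.1.1 ha
        · have : a ∈ r := mem_of_snd_edL h2 rfl
          simp at hnd
          exact hnd.1.2 this
      · rcases h2 with ⟨rfl, rfl⟩ | h2
        · have : b ∈ r := mem_of_snd_edL h1 rfl
          simp at hnd
          exact hnd.1.2 this
        · exact edL_not_both d (t' :: r) (List.Nodup.of_cons hnd) a b h1 h2

lemma EL_nodup {d : D} {t : T} {r : List T} (hnd : (t :: r).Nodup) : (EL d t r).Nodup := by
  have h : ((EL d t r).map Prod.fst).Nodup := by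
    rw [EL_map_fst]
    refine List.Nodup.cons (by simp) ?_
    exact hnd.map (Sum.inl_injective)
  exact h.of_map _

section Sol

variable [Fintype T] [Fintype D]

lemma sum_count_fst {α : Type*} [Fintype α] [DecidableEq α] (L : List (α × α)) (u : α) :
    ∑ v : α, L.count (u, v) = (L.map Prod.fst).count u := by
  induction L with
  | nil => simp
  | cons e L ih =>
    rcases e with ⟨a, b⟩
    simp only [List.count_cons, List.map_cons]
    rw [Finset.sum_add_distrib, ih]
    congr 1
    have hbeq : ∀ x y : α × α, (if x == y then (1:ℕ) else 0) = if x = y then 1 else 0 := by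
      intro x y; by_cases h : x = y <;> simp [h]
    have h : ∀ v : α, (if ((a, b) : α × α) == (u, v) then 1 else 0)
        = if v = b then (if a = u then 1 else 0) else 0 := by
      intro v
      rw [hbeq]
      by_cases h1 : a = u <;> by_cases h2 : v = b
      · subst h1; subst h2; simp
      · have h2' : b ≠ v := fun h => h2 h.symm
        simp [h1, h2, h2', Prod.ext_iff]
      · have h1' : u ≠ a := fun h => h1 h.symm
        simp [h1, h2, h1', Prod.ext_iff]
      · have h2' : b ≠ v := fun h => h2 h.symm
        simp [h1, h2, h2', Prod.ext_iff]
    simp only [h]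
    rw [Finset.sum_ite_eq' Finset.univ b]
    simp [beq_iff_eq]

lemma sum_count_snd {α : Type*} [Fintype α] [DecidableEq α] (L : List (α × α)) (u : α) :
    ∑ v : α, L.count (v, u) = (L.map Prod.snd).count u := by
  induction L with
  | nil => simp
  | cons e L ih =>
    rcases e with ⟨a, b⟩
    simp only [List.count_cons, List.map_cons]
    rw [Finset.sum_add_distrib, ih]
    congr 1
    have hbeq : ∀ x y : α × α, (if x == y then (1:ℕ) else 0) = if x = y then 1 else 0 := by
      intro x y; by_cases h : x = y <;> simp [h]
    have h : ∀ v : α, (if ((a, b) : α × α) == (v, u) then 1 else 0)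
        = if v = a then (if b = u then 1 else 0) else 0 := by
      intro v
      rw [hbeq]
      by_cases h1 : b = u <;> by_cases h2 : v = a
      · subst h1; subst h2; simp
      · have h2' : a ≠ v := fun h => h2 h.symm
        simp [h1, h2, h2', Prod.ext_iff]
      · have h1' : u ≠ b := fun h => h1 h.symm
        simp [h1, h2, h1', Prod.ext_iff]
      · have h2' : a ≠ v := fun h => h2 h.symm
        simp [h1, h2, h2', Prod.ext_iff]
    simp only [h]
    rw [Finset.sum_ite_eq' Finset.univ a]
    simp [beq_iff_eq]

/-- The edge-multiplicity function of the cycle `d, t, r..., d`. -/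
def solx (d : D) (t : T) (r : List T) (u v : T ⊕ D) : ℕ :=
  (EL d t r).count (u, v) + (EL d t r).count (v, u)

lemma solx_symm (d : D) (t : T) (r : List T) (u v : T ⊕ D) :
    solx d t r u v = solx d t r v u := add_comm _ _

lemma count_EL_le_one {d : D} {t : T} {r : List T} (hnd : (t :: r).Nodup)
    (p : (T ⊕ D) × (T ⊕ D)) : (EL d t r).count p ≤ 1 :=
  List.nodup_iff_count_le_one.mp (EL_nodup hnd) p

lemma solx_pos_iff {d : D} {t : T} {r : List T} {u v : T ⊕ D} :
    0 < solx d t r u v ↔ (u, v) ∈ EL d t r ∨ (v, u) ∈ EL d t r := by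
  have e1 : 0 < (EL d t r).count (u, v) ↔ (u, v) ∈ EL d t r := List.count_pos_iff
  have e2 : 0 < (EL d t r).count (v, u) ↔ (v, u) ∈ EL d t r := List.count_pos_iff
  unfold solx
  rw [← e1, ← e2]
  omega

lemma solx_eq_zero {d : D} {t : T} {r : List T} {u v : T ⊕ D}
    (h1 : (u, v) ∉ EL d t r) (h2 : (v, u) ∉ EL d t r) : solx d t r u v = 0 := by
  have e1 : (EL d t r).count (u, v) = 0 := by rw [List.count_eq_zero]; exact h1
  have e2 : (EL d t r).count (v, u) = 0 := by rw [List.count_eq_zero]; exact h2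
  unfold solx
  rw [e1, e2]

lemma solx_TT_one {d : D} {t : T} {r : List T} (hnd : (t :: r).Nodup) {s s' : T}
    (h : (Sum.inl s, Sum.inl s') ∈ EL d t r) :
    solx d t r (Sum.inl s) (Sum.inl s') = 1 := by
  have h2 : (Sum.inl s', Sum.inl s) ∉ EL d t r := by
    intro h2
    simp only [EL, List.mem_cons] at h h2
    rcases h with h | h
    · exact absurd h (by simp)
    rcases h2 with h2 | h2
    · exact absurd h2 (by simp)
    exact edL_not_both d (t :: r) hnd s s' h h2
  have e2 : (EL d t r).count (Sum.inl s', Sum.inl s) = 0 := by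
    rw [List.count_eq_zero]; exact h2
  have hle := count_EL_le_one (d := d) hnd (Sum.inl s, Sum.inl s')
  have hge : 0 < (EL d t r).count (Sum.inl s, Sum.inl s') :=
    List.count_pos_iff.mpr h
  unfold solx
  omega

lemma degree_calc {d : D} {t : T} {r : List T} (hnd : (t :: r).Nodup) (s : T)
    (hs : s ∈ t :: r) : ∑ v : T ⊕ D, solx d t r (Sum.inl s) v = 2 := by
  unfold solx
  rw [Finset.sum_add_distrib, sum_count_fst, sum_count_snd, EL_map_fst, EL_map_snd]
  rw [List.count_cons, List.count_append]
  have hc : ((t :: r).map Sum.inl).count (Sum.inl s : T ⊕ D) = 1 := by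
    rw [List.count_map_of_injective _ _ Sum.inl_injective]
    exact List.count_eq_one_of_mem hnd hs
  have h1 : ([Sum.inr d] : List (T ⊕ D)).count (Sum.inl s) = 0 := by
    rw [List.count_eq_zero]; simp
  have h0 : ((Sum.inr d : T ⊕ D) == Sum.inl s) = false := by
    rw [beq_eq_false_iff_ne]; simp
  rw [h0, hc, h1]
  simp

lemma depot_calc {d : D} (t : T) (r : List T) (e : D) :
    ∑ v : T ⊕ D, solx d t r (Sum.inr e) v = if e = d then 2 else 0 := by
  unfold solx
  rw [Finset.sum_add_distrib, sum_count_fst, sum_count_snd, EL_map_fst, EL_map_snd]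
  rw [List.count_cons, List.count_append]
  have hc : ((t :: r).map Sum.inl).count (Sum.inr e : T ⊕ D) = 0 := by
    rw [List.count_eq_zero]; simp
  have h1 : ([Sum.inr d] : List (T ⊕ D)).count (Sum.inr e) = if e = d then 1 else 0 := by
    by_cases h : e = d
    · subst h; simp
    · rw [List.count_eq_zero.mpr (by simp [h])]; simp [h]
  have h0 : (if (Sum.inr d : T ⊕ D) == Sum.inr e then (1:ℕ) else 0) = if e = d then 1 else 0 := by
    by_cases h : e = d
    · subst h; simp
    · have : ((Sum.inr d : T ⊕ D) == Sum.inr e) = false := by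
        rw [beq_eq_false_iff_ne]; simp [Ne.symm h]
      simp [this, h]
  rw [h0, h1, hc]
  by_cases h : e = d
  · subst h; simp
  · simp [h]

end Sol

end GMDTSPAux

namespace GMDTSPAux

set_option linter.unusedSectionVars false
attribute [local instance 2000] instBEqOfDecidableEq
attribute [local instance 2000] instLawfulBEq

variable {T D : Type*} [DecidableEq T] [DecidableEq D] [Fintype T] [Fintype D]

lemma EL_ne {d : D} {t : T} {r : List T} (hnd : (t :: r).Nodup) :
    ∀ p ∈ EL d t r, p.1 ≠ p.2 := by
  intro p hp
  rcases List.mem_cons.mp hp with rfl | hp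
  · simp
  · exact edL_ne d (t :: r) hnd p hp

lemma EL_no_rr {d : D} {t : T} {r : List T} (e e' : D) :
    (Sum.inr e, Sum.inr e') ∉ EL d t r := by
  intro hp
  rcases List.mem_cons.mp hp with h | hp
  · simp [Prod.ext_iff] at h
  · have h2 : (Sum.inr e : T ⊕ D) ∈ (edL d (t :: r)).map Prod.fst := by
      simpa using List.mem_map_of_mem (f := Prod.fst) hp
    rw [edL_map_fst] at h2
    simp at h2

lemma EL_snd_depot {d : D} {t : T} {r : List T} {p : (T ⊕ D) × (T ⊕ D)}
    (hp : p ∈ EL d t r) (e : D) (he : p.2 = Sum.inr e) : e = d := by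
  rcases List.mem_cons.mp hp with rfl | hp
  · simp at he
  · have h2 : p.2 ∈ (edL d (t :: r)).map Prod.snd := List.mem_map_of_mem hp
    rw [edL_map_snd] at h2
    rw [he] at h2
    simpa using h2

lemma EL_fst_depot {d : D} {t : T} {r : List T} {p : (T ⊕ D) × (T ⊕ D)}
    (hp : p ∈ EL d t r) (e : D) (he : p.1 = Sum.inr e) : e = d := by
  have h2 : p.1 ∈ (EL d t r).map Prod.fst := List.mem_map_of_mem hp
  rw [EL_map_fst] at h2
  rw [he] at h2
  simpa using h2

lemma path_to_depot (d : D) (t : T) (r : List T) :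
    ∀ m : List T, (∀ p ∈ edL d m, p ∈ EL d t r) → ∀ s ∈ m,
      Relation.ReflTransGen (fun u v => 0 < solx d t r u v) (Sum.inl s) (Sum.inr d)
  | [], _, s, hs => absurd hs (by simp)
  | [a], hsub, s, hs => by
      have hsa : s = a := by simpa using hs
      subst hsa
      have hm : (Sum.inl s, Sum.inr d) ∈ EL d t r := hsub _ (by simp [edL])
      exact Relation.ReflTransGen.single (solx_pos_iff.mpr (Or.inl hm))
  | a :: a' :: m', hsub, s, hs => by
      rcases List.mem_cons.mp hs with rfl | hs
      · have hm : (Sum.inl s, Sum.inl a') ∈ EL d t r := hsub _ (by simp [edL])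
        refine Relation.ReflTransGen.head (solx_pos_iff.mpr (Or.inl hm)) ?_
        exact path_to_depot d t r (a' :: m')
          (fun p hp => hsub p (List.mem_cons_of_mem _ hp)) a' (by simp)
      · exact path_to_depot d t r (a' :: m')
          (fun p hp => hsub p (List.mem_cons_of_mem _ hp)) s hs

/-- The feasible solution consisting of the single cycle `d, t, r..., d`
visiting every target. -/
def mkSol (clusters : Finset (Finset T)) (hne : ∀ C ∈ clusters, C.Nonempty)
    (d : D) (t : T) (r : List T) (hnd : (t :: r).Nodup) (hall : ∀ s : T, s ∈ t :: r) :
    GMDTSPSol T D clusters where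
  x := solx d t r
  y := fun _ => 1
  symm := solx_symm d t r
  loopless := fun u => solx_eq_zero (fun h => (EL_ne hnd _ h) rfl) (fun h => (EL_ne hnd _ h) rfl)
  no_depot_depot := fun e e' => solx_eq_zero (EL_no_rr e e') (EL_no_rr e' e)
  xTT_le_one := by
    intro t1 t2
    by_cases h : (Sum.inl t1, Sum.inl t2) ∈ EL d t r
    · exact le_of_eq (solx_TT_one hnd h)
    · by_cases h' : (Sum.inl t2, Sum.inl t1) ∈ EL d t r
      · rw [solx_symm]; exact le_of_eq (solx_TT_one hnd h')
      · rw [solx_eq_zero h h']; omega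
  xDT_le_two := fun e s =>
    Nat.add_le_add (count_EL_le_one hnd _) (count_EL_le_one hnd _)
  y_le_one := fun _ => le_refl 1
  degree := fun s => by rw [degree_calc hnd s (hall s)]
  depot_degree := fun e => by
    rw [depot_calc t r e]
    by_cases h : e = d <;> simp [h]
  connected := fun s _ =>
    ⟨d, path_to_depot d t r (t :: r) (fun p hp => List.mem_cons_of_mem _ hp) s (hall s)⟩
  one_depot_per_cycle := by
    intro e e' hee hpath
    have hsym : Symmetric (fun u v => 0 < solx d t r u v) := by
      intro u v h
      rw [solx_symm] at h
      exact h
    have hstep : ∀ u v : T ⊕ D, 0 < solx d t r u v →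
        ∀ e'' : D, v = Sum.inr e'' → e'' = d := by
      intro u v h e'' hv
      rcases solx_pos_iff.mp h with hm | hm
      · exact EL_snd_depot hm e'' hv
      · exact EL_fst_depot hm e'' hv
    have main : ∀ u v : T ⊕ D, Relation.ReflTransGen (fun u v => 0 < solx d t r u v) u v →
        u = v ∨ ∀ e'' : D, v = Sum.inr e'' → e'' = d := by
      intro u v h
      induction h with
      | refl => exact Or.inl rfl
      | tail h1 h2 ih => exact Or.inr (hstep _ _ h2)
    rcases main _ _ hpath with h | h
    · exact hee (Sum.inr_injective h)
    · have hed : e' = d := h e' rfl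
      have hpath' := @Std.Symm.symm _ _ (@Relation.ReflTransGen.stdSymm _ _ ⟨hsym⟩) _ _ hpath
      rcases main _ _ hpath' with h' | h'
      · exact hee (Sum.inr_injective h'.symm)
      · exact hee ((h' e rfl).trans hed.symm)
  covers := fun C hC => ⟨(hne C hC).choose, (hne C hC).choose_spec, rfl⟩

end GMDTSPAux

namespace GMDTSPAux

set_option linter.unusedSectionVars false
attribute [local instance 2000] instBEqOfDecidableEq
attribute [local instance 2000] instLawfulBEq

variable {T D : Type*} [DecidableEq T] [DecidableEq D] [Fintype T] [Fintype D]

lemma not_mem_edL_fst {d : D} {m : List T} {s : T} (hs : s ∉ m) (w : T ⊕ D) :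
    (Sum.inl s, w) ∉ edL d m := fun h => hs (mem_of_fst_edL h rfl)

lemma not_mem_edL_snd {d : D} {t0 : T} {r0 : List T} {s : T} (hs : s ∉ r0) (w : T ⊕ D) :
    (w, Sum.inl s) ∉ edL d (t0 :: r0) := fun h => hs (mem_of_snd_edL h rfl)

lemma mkSol_x {clusters : Finset (Finset T)} (hne : ∀ C ∈ clusters, C.Nonempty)
    (d : D) (t : T) (r : List T) (hnd : (t :: r).Nodup) (hall : ∀ s : T, s ∈ t :: r) :
    (mkSol clusters hne d t r hnd hall).x = solx d t r := rfl

/-- The test linear functional recording the two coordinates `x_{ia}`, `x_{ib}`. -/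
def Lmap (T D : Type*) (i a b : T) :
    (((T ⊕ D) → (T ⊕ D) → ℝ) × (T → ℝ)) →ₗ[ℝ] ℝ × ℝ where
  toFun p := (p.1 (Sum.inl i) (Sum.inl a), p.1 (Sum.inl i) (Sum.inl b))
  map_add' p q := rfl
  map_smul' c p := rfl

@[simp] lemma Lmap_apply (i a b : T) (p : ((T ⊕ D) → (T ⊕ D) → ℝ) × (T → ℝ)) :
    Lmap T D i a b p = (p.1 (Sum.inl i) (Sum.inl a), p.1 (Sum.inl i) (Sum.inl b)) := rfl

end GMDTSPAux

open GMDTSPAux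

/-- For any depot `d` and target `i`, the inequality
`x_{di} ≤ 2` does not define a facet of the GMDTSP polytope `P`: the face it
induces (forcing the degenerate two-edge cycle `d–i–d`) has codimension at
least `2` in `P`. -/
theorem depot_edge_upper_bound_not_facet {T D : Type*} [Fintype T]
    [DecidableEq T] [Fintype D] [Nonempty D] (clusters : Finset (Finset T))
    (hcover : ∀ t : T, ∃ C ∈ clusters, t ∈ C)
    (hdisj : ∀ C ∈ clusters, ∀ C' ∈ clusters, C ≠ C' → Disjoint C C')
    (hnonempty : ∀ C ∈ clusters, C.Nonempty)
    (hn : 3 ≤ Fintype.card T)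
    (d : D) (i : T) :
    ¬ IsFacetLe (fun p => p.1 (Sum.inr d) (Sum.inl i)) 2 (PF T D clusters ∅) ∧
      dimOf {p ∈ PF T D clusters ∅ | p.1 (Sum.inr d) (Sum.inl i) = 2} + 2 ≤
        dimOf (PF T D clusters ∅) := by
  letI : DecidableEq D := Classical.decEq D
  -- pick two further targets a ≠ b, both ≠ i
  have hcard : 1 < (Finset.univ.erase i).card := by
    rw [Finset.card_erase_of_mem (Finset.mem_univ i), Finset.card_univ]
    omega
  obtain ⟨a, ha, b, hb, hab⟩ := Finset.one_lt_card.mp hcard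
  have hai : a ≠ i := (Finset.mem_erase.mp ha).1
  have hbi : b ≠ i := (Finset.mem_erase.mp hb).1
  -- the list of remaining targets
  set rest : List T := (Finset.univ \ {i, a, b}).toList with hrest
  have hmem_rest : ∀ s : T, s ∈ rest ↔ ¬(s = i ∨ s = a ∨ s = b) := by
    intro s
    simp [hrest, Finset.mem_toList, Finset.mem_sdiff]
  have hir : i ∉ rest := by simp [hmem_rest]
  have har : a ∉ rest := by simp [hmem_rest]
  have hbr : b ∉ rest := by simp [hmem_rest]
  have hnd_rest : rest.Nodup := Finset.nodup_toList _
  -- three cyclic orders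
  have hnd1 : (a :: i :: b :: rest).Nodup := by
    simp [List.nodup_cons, hir, har, hbr, hnd_rest, hai, hbi, hab, Ne.symm hai,
      Ne.symm hbi, Ne.symm hab]
  have hnd2 : (i :: a :: b :: rest).Nodup := by
    simp [List.nodup_cons, hir, har, hbr, hnd_rest, hai, hbi, hab, Ne.symm hai,
      Ne.symm hbi, Ne.symm hab]
  have hnd3 : (i :: b :: a :: rest).Nodup := by
    simp [List.nodup_cons, hir, har, hbr, hnd_rest, hai, hbi, hab, Ne.symm hai,
      Ne.symm hbi, Ne.symm hab]
  have hall1 : ∀ s : T, s ∈ a :: i :: b :: rest := by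
    intro s
    simp [hmem_rest s]
    try tauto
  have hall2 : ∀ s : T, s ∈ i :: a :: b :: rest := by
    intro s
    simp [hmem_rest s]
    try tauto
  have hall3 : ∀ s : T, s ∈ i :: b :: a :: rest := by
    intro s
    simp [hmem_rest s]
    try tauto
  set sol1 := mkSol clusters hnonempty d a (i :: b :: rest) hnd1 hall1 with hsol1
  set sol2 := mkSol clusters hnonempty d i (a :: b :: rest) hnd2 hall2 with hsol2
  set sol3 := mkSol clusters hnonempty d i (b :: a :: rest) hnd3 hall3 with hsol3
  -- x-values of the three solutions on the two test coordinates
  have v1a : sol1.x (Sum.inl i) (Sum.inl a) = 1 := by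
    rw [hsol1, mkSol_x, solx_symm]
    exact solx_TT_one hnd1 (by simp [EL, edL])
  have v1b : sol1.x (Sum.inl i) (Sum.inl b) = 1 := by
    rw [hsol1, mkSol_x]
    exact solx_TT_one hnd1 (by simp [EL, edL])
  have v2a : sol2.x (Sum.inl i) (Sum.inl a) = 1 := by
    rw [hsol2, mkSol_x]
    exact solx_TT_one hnd2 (by simp [EL, edL])
  have v2b : sol2.x (Sum.inl i) (Sum.inl b) = 0 := by
    rw [hsol2, mkSol_x]
    refine solx_eq_zero ?_ ?_
    · intro h
      rcases List.mem_cons.mp h with h' | h'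
      · simp [Prod.ext_iff] at h'
      · have h2 : edL d (i :: a :: b :: rest)
            = (Sum.inl i, Sum.inl a) :: (Sum.inl a, Sum.inl b) :: edL d (b :: rest) := rfl
        rw [h2] at h'
        rcases List.mem_cons.mp h' with h'' | h''
        · simp [Prod.ext_iff, Ne.symm hab] at h''
        rcases List.mem_cons.mp h'' with h3 | h3
        · simp [Prod.ext_iff] at h3
          exact hai h3.symm
        · exact not_mem_edL_fst (by simp [hir, Ne.symm hbi]) _ h3
    · intro h
      rcases List.mem_cons.mp h with h' | h'
      · simp [Prod.ext_iff] at h'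
      · have h2 : edL d (i :: a :: b :: rest)
            = (Sum.inl i, Sum.inl a) :: (Sum.inl a, Sum.inl b) :: edL d (b :: rest) := rfl
        rw [h2] at h'
        rcases List.mem_cons.mp h' with h'' | h''
        · simp [Prod.ext_iff, hbi] at h''
        rcases List.mem_cons.mp h'' with h3 | h3
        · simp [Prod.ext_iff, Ne.symm hab] at h3
        · exact not_mem_edL_snd hir _ h3
  have v3a : sol3.x (Sum.inl i) (Sum.inl a) = 0 := by
    rw [hsol3, mkSol_x]
    refine solx_eq_zero ?_ ?_
    · intro h
      rcases List.mem_cons.mp h with h' | h'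
      · simp [Prod.ext_iff] at h'
      · have h2 : edL d (i :: b :: a :: rest)
            = (Sum.inl i, Sum.inl b) :: (Sum.inl b, Sum.inl a) :: edL d (a :: rest) := rfl
        rw [h2] at h'
        rcases List.mem_cons.mp h' with h'' | h''
        · simp [Prod.ext_iff, hab] at h''
        rcases List.mem_cons.mp h'' with h3 | h3
        · simp [Prod.ext_iff] at h3
          exact hbi h3.symm
        · exact not_mem_edL_fst (by simp [hir, Ne.symm hai]) _ h3
    · intro h
      rcases List.mem_cons.mp h with h' | h'
      · simp [Prod.ext_iff] at h'
      · have h2 : edL d (i :: b :: a :: rest)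
            = (Sum.inl i, Sum.inl b) :: (Sum.inl b, Sum.inl a) :: edL d (a :: rest) := rfl
        rw [h2] at h'
        rcases List.mem_cons.mp h' with h'' | h''
        · simp [Prod.ext_iff, hai] at h''
        rcases List.mem_cons.mp h'' with h3 | h3
        · simp [Prod.ext_iff, hab] at h3
        · exact not_mem_edL_snd hir _ h3
  have v3b : sol3.x (Sum.inl i) (Sum.inl b) = 1 := by
    rw [hsol3, mkSol_x]
    exact solx_TT_one hnd3 (by simp [EL, edL])
  -- the three incidence vectors are in P
  have hmem : ∀ sol : GMDTSPSol T D clusters, incVec sol ∈ PF T D clusters ∅ := by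
    intro sol
    exact subset_convexHull ℝ _ ⟨sol, by simp, rfl⟩
  -- valid inequalities on P
  have key : ∀ sol : GMDTSPSol T D clusters,
      sol.x (Sum.inl i) (Sum.inl a) + sol.x (Sum.inl i) (Sum.inl b)
        + sol.x (Sum.inl i) (Sum.inr d) ≤ 2 := by
    intro sol
    have hdeg := sol.degree i
    have hy := sol.y_le_one i
    have hsum : ∑ v ∈ ({Sum.inl a, Sum.inl b, Sum.inr d} : Finset (T ⊕ D)),
        sol.x (Sum.inl i) v ≤ ∑ v : T ⊕ D, sol.x (Sum.inl i) v :=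
      Finset.sum_le_sum_of_subset (Finset.subset_univ _)
    rw [Finset.sum_insert (by simp [hab]), Finset.sum_insert (by simp),
      Finset.sum_singleton] at hsum
    omega
  have hA : PF T D clusters ∅ ⊆ {p | 0 ≤ p.1 (Sum.inl i) (Sum.inl a)} := by
    apply convexHull_min
    · rintro p ⟨sol, -, rfl⟩
      simp [incVec]
    · exact convex_halfSpace_ge ⟨fun p q => rfl, fun c p => rfl⟩ 0
  have hB : PF T D clusters ∅ ⊆ {p | 0 ≤ p.1 (Sum.inl i) (Sum.inl b)} := by
    apply convexHull_min
    · rintro p ⟨sol, -, rfl⟩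
      simp [incVec]
    · exact convex_halfSpace_ge ⟨fun p q => rfl, fun c p => rfl⟩ 0
  have hC2 : PF T D clusters ∅ ⊆ {p | p.1 (Sum.inl i) (Sum.inl a)
      + p.1 (Sum.inl i) (Sum.inl b) + p.1 (Sum.inr d) (Sum.inl i) ≤ 2} := by
    apply convexHull_min
    · rintro p ⟨sol, -, rfl⟩
      have hk := key sol
      have hsymm := sol.symm (Sum.inr d) (Sum.inl i)
      simp only [incVec, Set.mem_setOf_eq]
      rw [hsymm]
      exact_mod_cast hk
    · refine convex_halfSpace_le ⟨fun p q => ?_, fun c p => ?_⟩ 2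
      · simp only [Prod.fst_add, Pi.add_apply]
        ring
      · simp only [Prod.smul_fst, Pi.smul_apply, smul_eq_mul, RingHom.id_apply]
        ring
  -- the face is contained in the kernel of Lmap
  set faceSet := {p ∈ PF T D clusters ∅ | p.1 (Sum.inr d) (Sum.inl i) = 2} with hfaceSet
  have hFker : ∀ p ∈ faceSet, Lmap T D i a b p = 0 := by
    rintro p ⟨hp, he⟩
    have h1 := hA hp
    have h2 := hB hp
    have h3 := hC2 hp
    simp only [Set.mem_setOf_eq] at h1 h2 h3
    rw [he] at h3
    have hia : p.1 (Sum.inl i) (Sum.inl a) = 0 := by linarith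
    have hib : p.1 (Sum.inl i) (Sum.inl b) = 0 := by linarith
    rw [Lmap_apply, hia, hib]
    rfl
  have hdirF : vectorSpan ℝ faceSet ≤ LinearMap.ker (Lmap T D i a b) := by
    rw [vectorSpan_def]
    rw [Submodule.span_le]
    rintro v hv
    obtain ⟨p, hp, q, hq, rfl⟩ := Set.mem_vsub.mp hv
    rw [SetLike.mem_coe, LinearMap.mem_ker, vsub_eq_sub, map_sub, hFker p hp, hFker q hq,
      sub_zero]
  set W := vectorSpan ℝ (PF T D clusters ∅) with hW
  -- two direction vectors in W
  have hw1 : incVec sol2 - incVec sol1 ∈ W :=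
    vsub_mem_vectorSpan ℝ (hmem sol2) (hmem sol1)
  have hw2 : incVec sol3 - incVec sol1 ∈ W :=
    vsub_mem_vectorSpan ℝ (hmem sol3) (hmem sol1)
  have hLw1 : Lmap T D i a b (incVec sol2 - incVec sol1) = ((0 : ℝ), (-1 : ℝ)) := by
    rw [map_sub]
    simp only [Lmap_apply, incVec, v1a, v1b, v2a, v2b]
    rw [Prod.ext_iff]
    constructor <;> simp
  have hLw2 : Lmap T D i a b (incVec sol3 - incVec sol1) = ((-1 : ℝ), (0 : ℝ)) := by
    rw [map_sub]
    simp only [Lmap_apply, incVec, v1a, v1b, v3a, v3b]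
    rw [Prod.ext_iff]
    constructor <;> simp
  -- rank–nullity for Lmap restricted to W
  set Ld := (Lmap T D i a b).domRestrict W with hLd
  have hrn := LinearMap.finrank_range_add_finrank_ker Ld
  have hr1 : ((0 : ℝ), (-1 : ℝ)) ∈ LinearMap.range Ld :=
    ⟨⟨_, hw1⟩, by rw [hLd, LinearMap.domRestrict_apply]; exact hLw1⟩
  have hr2 : ((-1 : ℝ), (0 : ℝ)) ∈ LinearMap.range Ld :=
    ⟨⟨_, hw2⟩, by rw [hLd, LinearMap.domRestrict_apply]; exact hLw2⟩
  have htop : LinearMap.range Ld = ⊤ := by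
    rw [Submodule.eq_top_iff']
    intro v
    have hv : v = (-v.1) • ((-1 : ℝ), (0 : ℝ)) + (-v.2) • ((0 : ℝ), (-1 : ℝ)) := by
      rw [Prod.ext_iff]
      constructor <;> simp
    rw [hv]
    exact Submodule.add_mem _ (Submodule.smul_mem _ _ hr2) (Submodule.smul_mem _ _ hr1)
  have hrange2 : Module.finrank ℝ (LinearMap.range Ld) = 2 := by
    rw [htop, finrank_top]
    simp [Module.finrank_prod]
  -- the face direction embeds into the kernel of Ld
  have hFW : vectorSpan ℝ faceSet ≤ W := vectorSpan_mono ℝ (Set.sep_subset _ _)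
  have hkerle : Module.finrank ℝ (vectorSpan ℝ faceSet)
      ≤ Module.finrank ℝ (LinearMap.ker Ld) := by
    have hinj : Function.Injective (fun v : vectorSpan ℝ faceSet =>
        (⟨⟨v.1, hFW v.2⟩, by
          rw [LinearMap.mem_ker, hLd, LinearMap.domRestrict_apply]
          exact hdirF v.2⟩ : LinearMap.ker Ld)) := by
      intro u v h
      apply Subtype.ext
      exact congrArg (fun z => (Subtype.val (Subtype.val z))) h
    exact LinearMap.finrank_le_finrank_of_injective
      (f := { toFun := fun v : vectorSpan ℝ faceSet =>
                (⟨⟨v.1, hFW v.2⟩, by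
                  rw [LinearMap.mem_ker, hLd, LinearMap.domRestrict_apply]
                  exact hdirF v.2⟩ : LinearMap.ker Ld)
              map_add' := fun u v => by apply Subtype.ext; apply Subtype.ext; rfl
              map_smul' := fun c v => by apply Subtype.ext; apply Subtype.ext; rfl }) hinj
  have hdimP : dimOf (PF T D clusters ∅) = Module.finrank ℝ W := by
    unfold dimOf
    rw [direction_affineSpan]
  have hdimF : dimOf faceSet = Module.finrank ℝ (vectorSpan ℝ faceSet) := by
    unfold dimOf
    rw [direction_affineSpan]
  have hmain : dimOf faceSet + 2 ≤ dimOf (PF T D clusters ∅) := by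
    rw [hdimP, hdimF]
    omega
  refine ⟨?_, hmain⟩
  rintro ⟨-, hdim⟩
  have hdim' : dimOf faceSet = dimOf (PF T D clusters ∅) - 1 := by
    rw [hfaceSet]
    simpa using hdim
  omega
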